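/- If M is a maximal partial Latin square of order n > 1 with exactly ⌈n²/2⌉ filled cells, then the minimum frequency m (the minimum over all rows, columns and entries of the number of occurrences) satisfies m = ⌊n/2⌋. -/

import Mathlib

/-- A partial Latin square of order `n`: each symbol appears at most once
in every row and at most once in every column. -/
def IsPLS {n : ℕ} (M : Fin n → Fin n → Option (Fin n)) : Prop :=
  (∀ r c c' s, M r c = some s → M r c' = some s → c = c') ∧
  (∀ r r' c s, M r c = some s → M r' c = some s → r = r')

/-- A maximal partial Latin square: no empty cell can be filled. -/
def IsMaximalPLS {n : ℕ} (M : Fin n → Fin n → Option (Fin n)) : Prop :=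
  IsPLS M ∧ ∀ r c (s : Fin n), M r c = none →
    ¬ IsPLS (fun r' c' => if r' = r ∧ c' = c then some s else M r' c')

/-- Number of filled cells. -/
def plsSize {n : ℕ} (M : Fin n → Fin n → Option (Fin n)) : ℕ :=
  (Finset.univ.filter (fun rc : Fin n × Fin n => (M rc.1 rc.2).isSome)).card

def plsRowFreq {n : ℕ} (M : Fin n → Fin n → Option (Fin n)) (r : Fin n) : ℕ :=
  (Finset.univ.filter (fun c : Fin n => (M r c).isSome)).card

def plsColFreq {n : ℕ} (M : Fin n → Fin n → Option (Fin n)) (c : Fin n) : ℕ :=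
  (Finset.univ.filter (fun r : Fin n => (M r c).isSome)).card

def plsSymFreq {n : ℕ} (M : Fin n → Fin n → Option (Fin n)) (s : Fin n) : ℕ :=
  (Finset.univ.filter (fun rc : Fin n × Fin n => M rc.1 rc.2 = some s)).card

open Finset

section Aux

variable {n : ℕ} {M : Fin n → Fin n → Option (Fin n)}

/-! ### Extension lemma and maximality consequences -/

lemma PLSaux.ext_isPLS (hM : IsPLS M) {r c : Fin n} {s : Fin n}
    (hr : ∀ c', M r c' ≠ some s) (hc : ∀ r', M r' c ≠ some s) :
    IsPLS (fun r' c' => if r' = r ∧ c' = c then some s else M r' c') := by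
  constructor
  · intro a b b' t hb hb'
    simp only at hb hb'
    by_cases h1 : a = r ∧ b = c
    · rw [if_pos h1] at hb
      cases hb
      by_cases h2 : a = r ∧ b' = c
      · exact h1.2.trans h2.2.symm
      · rw [if_neg h2] at hb'
        exact absurd (h1.1 ▸ hb') (hr b')
    · rw [if_neg h1] at hb
      by_cases h2 : a = r ∧ b' = c
      · rw [if_pos h2] at hb'
        cases hb'
        exact absurd (h2.1 ▸ hb) (hr b)
      · rw [if_neg h2] at hb'
        exact hM.1 a b b' t hb hb'
  · intro a a' b t hb hb'
    simp only at hb hb'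
    by_cases h1 : a = r ∧ b = c
    · rw [if_pos h1] at hb
      cases hb
      by_cases h2 : a' = r ∧ b = c
      · exact h1.1.trans h2.1.symm
      · rw [if_neg h2] at hb'
        exact absurd (h1.2 ▸ hb') (hc a')
    · rw [if_neg h1] at hb
      by_cases h2 : a' = r ∧ b = c
      · rw [if_pos h2] at hb'
        cases hb'
        exact absurd (h2.2 ▸ hb) (hc a)
      · rw [if_neg h2] at hb'
        exact hM.2 a a' b t hb hb'

/-- In a maximal PLS, every symbol hits every empty cell's row or column. -/
lemma PLSaux.claimB (hM : IsMaximalPLS M) {r c : Fin n} (h0 : M r c = none) (s : Fin n) :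
    (∃ c', M r c' = some s) ∨ (∃ r', M r' c = some s) := by
  by_contra h
  push_neg at h
  exact hM.2 r c s h0 (PLSaux.ext_isPLS hM.1 h.1 h.2)

/-! ### Frequencies as sets of symbols -/

lemma PLSaux.rowFreq_eq
    (h1 : ∀ r c c' s, M r c = some s → M r c' = some s → c = c') (r : Fin n) :
    plsRowFreq M r = (univ.filter (fun s : Fin n => ∃ c, M r c = some s)).card := by
  apply Finset.card_bij (fun c hc => (M r c).get (by simpa using (mem_filter.mp hc).2))
  · intro c hc
    simp only [mem_filter, mem_univ, true_and]
    exact ⟨c, (Option.some_get _).symm⟩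
  · intro c hc c' hc' h
    exact h1 r c c' _ (Option.some_get _).symm (by rw [h]; exact (Option.some_get _).symm)
  · intro s hs
    obtain ⟨c, hc⟩ := (mem_filter.mp hs).2
    exact ⟨c, by simp [hc], by simp [hc]⟩

lemma PLSaux.colFreq_eq
    (h2 : ∀ r r' c s, M r c = some s → M r' c = some s → r = r') (c : Fin n) :
    plsColFreq M c = (univ.filter (fun s : Fin n => ∃ r, M r c = some s)).card :=
  PLSaux.rowFreq_eq (M := fun c r => M r c) (fun c r r' s h h' => h2 r r' c s h h') c

/-- Claim A: for an empty cell, the row and column frequencies sum to at least `n`. -/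
lemma PLSaux.claimA (hM : IsMaximalPLS M) {r c : Fin n} (h0 : M r c = none) :
    n ≤ plsRowFreq M r + plsColFreq M c := by
  classical
  set A := univ.filter (fun s : Fin n => ∃ c', M r c' = some s) with hA
  set B := univ.filter (fun s : Fin n => ∃ r', M r' c = some s) with hB
  have hcover : (univ : Finset (Fin n)) ⊆ A ∪ B := by
    intro s _
    rcases PLSaux.claimB hM h0 s with h | h
    · exact mem_union_left _ (mem_filter.mpr ⟨mem_univ _, h⟩)
    · exact mem_union_right _ (mem_filter.mpr ⟨mem_univ _, h⟩)
  have h1 : n ≤ (A ∪ B).card := by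
    have := Finset.card_le_card hcover
    simpa using this
  have h2 : (A ∪ B).card ≤ A.card + B.card := card_union_le _ _
  have hAc : A.card = plsRowFreq M r := (PLSaux.rowFreq_eq hM.1.1 r).symm
  have hBc : B.card = plsColFreq M c := (PLSaux.colFreq_eq hM.1.2 c).symm
  omega

/-! ### Counting lemmas -/

lemma PLSaux.card_filter_fst (p : Fin n → Fin n → Prop) [∀ r c, Decidable (p r c)] :
    (univ.filter (fun rc : Fin n × Fin n => p rc.1 rc.2)).card
      = ∑ r, (univ.filter (fun c => p r c)).card := by
  rw [Finset.card_filter, Fintype.sum_prod_type]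
  exact Finset.sum_congr rfl fun r _ => (Finset.card_filter _ _).symm

lemma PLSaux.card_filter_snd (p : Fin n → Fin n → Prop) [∀ r c, Decidable (p r c)] :
    (univ.filter (fun rc : Fin n × Fin n => p rc.1 rc.2)).card
      = ∑ c, (univ.filter (fun r => p r c)).card := by
  rw [Finset.card_filter, Fintype.sum_prod_type_right]
  exact Finset.sum_congr rfl fun c _ => (Finset.card_filter _ _).symm

lemma PLSaux.size_eq_sum_row (M : Fin n → Fin n → Option (Fin n)) :
    plsSize M = ∑ r, plsRowFreq M r := by
  unfold plsSize plsRowFreq; exact PLSaux.card_filter_fst (fun r c => (M r c).isSome)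

lemma PLSaux.size_eq_sum_col (M : Fin n → Fin n → Option (Fin n)) :
    plsSize M = ∑ c, plsColFreq M c := by
  unfold plsSize plsColFreq; exact PLSaux.card_filter_snd (fun r c => (M r c).isSome)

lemma PLSaux.rowFreq_le (M : Fin n → Fin n → Option (Fin n)) (r : Fin n) :
    plsRowFreq M r ≤ n := by
  simpa [plsRowFreq] using card_filter_le (univ : Finset (Fin n)) _

lemma PLSaux.colFreq_le (M : Fin n → Fin n → Option (Fin n)) (c : Fin n) :
    plsColFreq M c ≤ n := by
  simpa [plsColFreq] using card_filter_le (univ : Finset (Fin n)) _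

lemma PLSaux.empty_row_card (M : Fin n → Fin n → Option (Fin n)) (r : Fin n) :
    (univ.filter (fun c => M r c = none)).card = n - plsRowFreq M r := by
  have h := Finset.card_filter_add_card_filter_not
    (s := (univ : Finset (Fin n))) (p := fun c => (M r c).isSome)
  simp only [Finset.card_univ, Fintype.card_fin] at h
  have e : (univ.filter (fun c => ¬ (M r c).isSome)) = (univ.filter (fun c => M r c = none)) := by
    apply filter_congr; intro c _; simp [Option.not_isSome_iff_eq_none]
  rw [e] at h
  unfold plsRowFreq
  omega

lemma PLSaux.empty_col_card (M : Fin n → Fin n → Option (Fin n)) (c : Fin n) :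
    (univ.filter (fun r => M r c = none)).card = n - plsColFreq M c := by
  have h := Finset.card_filter_add_card_filter_not
    (s := (univ : Finset (Fin n))) (p := fun r => (M r c).isSome)
  simp only [Finset.card_univ, Fintype.card_fin] at h
  have e : (univ.filter (fun r => ¬ (M r c).isSome)) = (univ.filter (fun r => M r c = none)) := by
    apply filter_congr; intro r _; simp [Option.not_isSome_iff_eq_none]
  rw [e] at h
  unfold plsColFreq
  omega

lemma PLSaux.sum_empty_fst (M : Fin n → Fin n → Option (Fin n)) (f : Fin n → ℕ) :
    ∑ rc ∈ (univ.filter (fun rc : Fin n × Fin n => M rc.1 rc.2 = none)), f rc.1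
      = ∑ r, f r * (univ.filter (fun c => M r c = none)).card := by
  rw [Finset.sum_filter, Fintype.sum_prod_type]
  refine Finset.sum_congr rfl fun r _ => ?_
  rw [Finset.card_filter, Finset.mul_sum]
  refine Finset.sum_congr rfl fun c _ => ?_
  by_cases h : M r c = none <;> simp [h]

lemma PLSaux.sum_empty_snd (M : Fin n → Fin n → Option (Fin n)) (g : Fin n → ℕ) :
    ∑ rc ∈ (univ.filter (fun rc : Fin n × Fin n => M rc.1 rc.2 = none)), g rc.2
      = ∑ c, g c * (univ.filter (fun r => M r c = none)).card := by
  rw [Finset.sum_filter, Fintype.sum_prod_type_right]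
  refine Finset.sum_congr rfl fun c _ => ?_
  rw [Finset.card_filter, Finset.mul_sum]
  refine Finset.sum_congr rfl fun r _ => ?_
  by_cases h : M r c = none <;> simp [h]

lemma PLSaux.empty_card (M : Fin n → Fin n → Option (Fin n)) :
    (univ.filter (fun rc : Fin n × Fin n => M rc.1 rc.2 = none)).card
      = n * n - plsSize M := by
  rw [PLSaux.card_filter_fst (fun r c => M r c = none)]
  rw [Finset.sum_congr rfl (fun r _ => PLSaux.empty_row_card M r), PLSaux.size_eq_sum_row]
  have h2 : ∀ r : Fin n, plsRowFreq M r ≤ n := PLSaux.rowFreq_le M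
  have h3 : ∑ r : Fin n, (n - plsRowFreq M r) + ∑ r : Fin n, plsRowFreq M r = n * n := by
    rw [← Finset.sum_add_distrib]
    have e : ∀ r : Fin n, (n - plsRowFreq M r) + plsRowFreq M r = n := fun r => by
      have := h2 r; omega
    rw [Finset.sum_congr rfl fun r _ => e r]
    simp [Finset.card_univ, mul_comm]
  omega

/-- The main counting inequality coming from Claim A summed over all empty cells. -/
lemma PLSaux.main_ineq (hM : IsMaximalPLS M) :
    n * (n * n - plsSize M) ≤ ∑ r, plsRowFreq M r * (n - plsRowFreq M r)
      + ∑ c, plsColFreq M c * (n - plsColFreq M c) := by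
  classical
  set E := univ.filter (fun rc : Fin n × Fin n => M rc.1 rc.2 = none) with hE
  have h1 : E.card * n ≤ ∑ rc ∈ E, (plsRowFreq M rc.1 + plsColFreq M rc.2) := by
    have := Finset.card_nsmul_le_sum E
      (fun rc => plsRowFreq M rc.1 + plsColFreq M rc.2) n
      (fun rc hrc => PLSaux.claimA hM (by simpa [hE] using (mem_filter.mp hrc).2))
    simpa [smul_eq_mul] using this
  rw [Finset.sum_add_distrib] at h1
  rw [hE, PLSaux.sum_empty_fst, PLSaux.sum_empty_snd] at h1
  have e1 : ∑ r, plsRowFreq M r * (univ.filter (fun c => M r c = none)).card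
      = ∑ r, plsRowFreq M r * (n - plsRowFreq M r) :=
    Finset.sum_congr rfl (fun r _ => by rw [PLSaux.empty_row_card M r])
  have e2 : ∑ c, plsColFreq M c * (univ.filter (fun r => M r c = none)).card
      = ∑ c, plsColFreq M c * (n - plsColFreq M c) :=
    Finset.sum_congr rfl (fun c _ => by rw [PLSaux.empty_col_card M c])
  rw [e1, e2] at h1
  have hcard : E.card = n * n - plsSize M := PLSaux.empty_card M
  calc n * (n * n - plsSize M) = E.card * n := by rw [hcard, mul_comm]
    _ ≤ _ := h1

/-! ### Arithmetic lemmas -/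

lemma PLSaux.quarter_bound {m a : ℕ} (h : a ≤ m) : a * (m - a) ≤ m ^ 2 / 4 := by
  rw [Nat.le_div_iff_mul_le (by norm_num : 0 < 4)]
  obtain ⟨b, rfl⟩ : ∃ b, m = a + b := ⟨m - a, by omega⟩
  have e : a + b - a = b := by omega
  rw [e]
  zify
  nlinarith [sq_nonneg ((a : ℤ) - b)]

lemma PLSaux.quarter_strict {m a : ℕ} (h : a + 1 ≤ m / 2) : a * (m - a) + 1 ≤ m ^ 2 / 4 := by
  rcases Nat.even_or_odd m with ⟨k, rfl⟩ | ⟨k, rfl⟩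
  · have ha : a + 1 ≤ k := by omega
    rw [show (k + k) ^ 2 = 4 * (k * k) from by ring,
      Nat.mul_div_cancel_left _ (by norm_num : 0 < 4)]
    zify [show a ≤ k + k from by omega]
    have h1 : (1 : ℤ) ≤ (k : ℤ) - a := by omega
    nlinarith [sq_nonneg ((k : ℤ) - a - 1), h1]
  · have ha : a + 1 ≤ k := by omega
    have hq : (4 * (k * k + k) + 1) / 4 = k * k + k := by generalize k * k + k = m; omega
    rw [show (2 * k + 1) ^ 2 = 4 * (k * k + k) + 1 from by ring, hq]
    zify [show a ≤ 2 * k + 1 from by omega]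
    have h1 : (1 : ℤ) ≤ (k : ℤ) - a := by omega
    nlinarith [sq_nonneg ((k : ℤ) - a - 1), h1]

lemma PLSaux.sq_mod_four (m : ℕ) : m ^ 2 % 4 = 0 ∨ m ^ 2 % 4 = 1 := by
  rcases Nat.even_or_odd m with ⟨k, rfl⟩ | ⟨k, rfl⟩
  · left; rw [show (k + k) ^ 2 = 4 * (k * k) from by ring]; exact Nat.mul_mod_right 4 _
  · right
    rw [show (2 * k + 1) ^ 2 = 1 + 4 * (k * k + k) from by ring]
    rw [Nat.add_mul_mod_self_left]

lemma PLSaux.two_quarter {m : ℕ} : m * m - (m ^ 2 + 1) / 2 = 2 * (m ^ 2 / 4) := by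
  have h := PLSaux.sq_mod_four m
  have e : m * m = m ^ 2 := by ring
  rw [e]
  generalize m ^ 2 = M at h ⊢
  omega

lemma PLSaux.exists_arith {m : ℕ} (hn : 1 < m) : (m ^ 2 + 1) / 2 < m * (m / 2 + 1) := by
  rcases Nat.even_or_odd m with ⟨k, rfl⟩ | ⟨k, rfl⟩
  · rw [show (k + k) ^ 2 = 4 * (k * k) from by ring,
      show (k + k) * ((k + k) / 2 + 1) = 2 * (k * k) + (k + k) from by
        rw [show (k + k) / 2 = k from by omega]; ring]
    generalize k * k = K
    omega
  · rw [show (2 * k + 1) ^ 2 = 4 * (k * k + k) + 1 from by ring,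
      show (2 * k + 1) * ((2 * k + 1) / 2 + 1) = 2 * (k * k + k) + (k + 1) from by
        rw [show (2 * k + 1) / 2 = k from by omega]; ring]
    generalize k * k + k = K
    omega

lemma PLSaux.symbol_arith {m h : ℕ} (hn : 1 < m) (hh : h + 1 ≤ m / 2) :
    (m ^ 2 + 1) / 2 < (m - h) * (m - h) + h * (m / 2) := by
  rcases Nat.even_or_odd m with ⟨k, rfl⟩ | ⟨k, rfl⟩
  · rw [show (k + k) ^ 2 = 4 * (k * k) from by ring,
      show (k + k) / 2 = k from by omega]
    have hb : (4 * (k * k) + 1) / 2 = 2 * (k * k) := by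
      generalize k * k = K; omega
    rw [hb]
    have hh' : h + 1 ≤ k := by omega
    zify [show h ≤ k + k from by omega]
    have h1 : (1 : ℤ) ≤ (k : ℤ) - h := by omega
    nlinarith [mul_le_mul h1 h1 (by linarith) (by linarith : (0:ℤ) ≤ (k:ℤ) - h), h1,
      mul_nonneg (by linarith : (0:ℤ) ≤ (k:ℤ) - h) (by omega : (0:ℤ) ≤ (k:ℤ))]
  · rw [show (2 * k + 1) ^ 2 = 4 * (k * k + k) + 1 from by ring,
      show (2 * k + 1) / 2 = k from by omega]
    have hb : (4 * (k * k + k) + 1 + 1) / 2 = 2 * (k * k + k) + 1 := by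
      generalize k * k + k = K; omega
    rw [hb]
    have hh' : h + 1 ≤ k := by omega
    zify [show h ≤ 2 * k + 1 from by omega]
    have h1 : (1 : ℤ) ≤ (k : ℤ) - h := by omega
    nlinarith [mul_le_mul h1 h1 (by linarith) (by linarith : (0:ℤ) ≤ (k:ℤ) - h), h1,
      mul_nonneg (by linarith : (0:ℤ) ≤ (k:ℤ) - h) (by omega : (0:ℤ) ≤ (k:ℤ))]

/-- Abstract form of the row/column lower-bound argument. -/
lemma PLSaux.lower_core (hn : 1 < n) (f g : Fin n → ℕ)
    (hf : ∀ r, f r ≤ n) (hg : ∀ c, g c ≤ n)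
    (hsum : n * (n * n - (n ^ 2 + 1) / 2)
      ≤ ∑ r, f r * (n - f r) + ∑ c, g c * (n - g c)) :
    ∀ r, n / 2 ≤ f r := by
  intro r0
  by_contra hcon
  push_neg at hcon
  have hq1 : 1 ≤ n ^ 2 / 4 := by
    rw [Nat.le_div_iff_mul_le (by norm_num : 0 < 4)]
    nlinarith
  have key0 : f r0 * (n - f r0) + 1 ≤ n ^ 2 / 4 := PLSaux.quarter_strict (by omega)
  have hA : ∑ r, f r * (n - f r) + 1 ≤ n * (n ^ 2 / 4) := by
    have hsplit : f r0 * (n - f r0) + ∑ r ∈ univ.erase r0, f r * (n - f r)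
        = ∑ r, f r * (n - f r) := Finset.add_sum_erase univ (fun r => f r * (n - f r)) (mem_univ r0)
    have hrest : ∑ r ∈ univ.erase r0, f r * (n - f r) ≤ (n - 1) * (n ^ 2 / 4) := by
      have := Finset.sum_le_card_nsmul (univ.erase r0) (fun r => f r * (n - f r))
        (n ^ 2 / 4) (fun r _ => PLSaux.quarter_bound (hf r))
      simpa [Finset.card_erase_of_mem, Finset.card_univ, smul_eq_mul] using this
    have hmul : (n - 1) * (n ^ 2 / 4) + (n ^ 2 / 4) = n * (n ^ 2 / 4) := by
      obtain ⟨m, rfl⟩ : ∃ m, n = m + 1 := ⟨n - 1, by omega⟩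
      simp [Nat.add_sub_cancel]
      ring
    omega
  have hB : ∑ c, g c * (n - g c) ≤ n * (n ^ 2 / 4) := by
    have := Finset.sum_le_card_nsmul (univ : Finset (Fin n)) (fun c => g c * (n - g c))
      (n ^ 2 / 4) (fun c _ => PLSaux.quarter_bound (hg c))
    simpa [Finset.card_univ, smul_eq_mul] using this
  have hC : n * (n * n - (n ^ 2 + 1) / 2) = 2 * (n * (n ^ 2 / 4)) := by
    rw [PLSaux.two_quarter]; ring
  rw [hC] at hsum
  have hP : 1 ≤ n * (n ^ 2 / 4) := le_trans hq1 (Nat.le_mul_of_pos_left _ (by omega))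
  omega

/-! ### Symbol frequencies -/

lemma PLSaux.symRows_card
    (h1 : ∀ r c c' s, M r c = some s → M r c' = some s → c = c') (s : Fin n) :
    (univ.filter (fun r : Fin n => ∃ c, M r c = some s)).card = plsSymFreq M s := by
  symm
  apply Finset.card_bij (fun (rc : Fin n × Fin n) _ => rc.1)
  · intro rc hrc
    simp only [mem_filter, mem_univ, true_and] at hrc ⊢
    exact ⟨rc.2, hrc⟩
  · intro a ha b hb hab
    have ha' : M a.1 a.2 = some s := by simpa using (mem_filter.mp ha).2
    have hb' : M b.1 b.2 = some s := by simpa using (mem_filter.mp hb).2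
    have : a.2 = b.2 := h1 a.1 a.2 b.2 s ha' (by rw [hab]; exact hb')
    exact Prod.ext hab this
  · intro r hr
    obtain ⟨c, hc⟩ := by simpa using (mem_filter.mp hr).2
    exact ⟨(r, c), by simp [hc], rfl⟩

lemma PLSaux.symCols_card
    (h2 : ∀ r r' c s, M r c = some s → M r' c = some s → r = r') (s : Fin n) :
    (univ.filter (fun c : Fin n => ∃ r, M r c = some s)).card = plsSymFreq M s := by
  symm
  apply Finset.card_bij (fun (rc : Fin n × Fin n) _ => rc.2)
  · intro rc hrc
    simp only [mem_filter, mem_univ, true_and] at hrc ⊢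
    exact ⟨rc.1, hrc⟩
  · intro a ha b hb hab
    have ha' : M a.1 a.2 = some s := by simpa using (mem_filter.mp ha).2
    have hb' : M b.1 b.2 = some s := by simpa using (mem_filter.mp hb).2
    have : a.1 = b.1 := h2 a.1 b.1 a.2 s ha' (by rw [hab]; exact hb')
    exact Prod.ext this hab
  · intro c hc
    obtain ⟨r, hr⟩ := by simpa using (mem_filter.mp hc).2
    exact ⟨(r, c), by simp [hr], rfl⟩

end Aux

/-- If `M` is a maximal PLS(n), `n > 1`, with exactly `⌈n²/2⌉` filled cells,
then the minimum frequency over rows, columns and entries equals `⌊n/2⌋`. -/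
theorem stmt_0 {n : ℕ} (hn : 1 < n) (M : Fin n → Fin n → Option (Fin n))
    (hM : IsMaximalPLS M) (hF : plsSize M = (n ^ 2 + 1) / 2) :
    (∀ r, n / 2 ≤ plsRowFreq M r) ∧ (∀ c, n / 2 ≤ plsColFreq M c) ∧
    (∀ s, n / 2 ≤ plsSymFreq M s) ∧
    ((∃ r, plsRowFreq M r = n / 2) ∨ (∃ c, plsColFreq M c = n / 2) ∨
      (∃ s, plsSymFreq M s = n / 2)) := by
  classical
  have hmain := PLSaux.main_ineq hM
  rw [hF] at hmain
  -- row and column lower bounds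
  have hrow : ∀ r, n / 2 ≤ plsRowFreq M r :=
    PLSaux.lower_core hn (plsRowFreq M) (plsColFreq M)
      (PLSaux.rowFreq_le M) (PLSaux.colFreq_le M) hmain
  have hcol : ∀ c, n / 2 ≤ plsColFreq M c :=
    PLSaux.lower_core hn (plsColFreq M) (plsRowFreq M)
      (PLSaux.colFreq_le M) (PLSaux.rowFreq_le M) (le_of_le_of_eq hmain (Nat.add_comm _ _))
  -- symbol lower bound
  have hsym : ∀ s, n / 2 ≤ plsSymFreq M s := by
    intro s
    by_contra hcon
    push_neg at hcon
    have hh1 : plsSymFreq M s + 1 ≤ n / 2 := hcon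
    set h := plsSymFreq M s with hhdef
    have hRcard : (Finset.univ.filter (fun r : Fin n => ∃ c, M r c = some s)).card = h :=
      PLSaux.symRows_card hM.1.1 s
    have hCcard : (Finset.univ.filter (fun c : Fin n => ∃ r, M r c = some s)).card = h :=
      PLSaux.symCols_card hM.1.2 s
    have hstep : ∀ r : Fin n, r ∉ Finset.univ.filter (fun r : Fin n => ∃ c, M r c = some s) →
        n - h ≤ plsRowFreq M r := by
      intro r hr
      have hsub : (Finset.univ.filter (fun c : Fin n => ¬ ∃ r', M r' c = some s))
          ⊆ (Finset.univ.filter (fun c : Fin n => (M r c).isSome)) := by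
        intro c hc
        simp only [mem_filter, mem_univ, true_and] at hc ⊢
        by_contra hns
        have h0 : M r c = none := Option.not_isSome_iff_eq_none.mp hns
        rcases PLSaux.claimB hM h0 s with h' | h'
        · exact hr (mem_filter.mpr ⟨mem_univ _, h'⟩)
        · exact hc h'
      have hcard2 : (Finset.univ.filter (fun c : Fin n => ¬ ∃ r', M r' c = some s)).card
          = n - h := by
        have hh := Finset.card_filter_add_card_filter_not
          (s := (Finset.univ : Finset (Fin n)))
          (p := fun c : Fin n => ∃ r', M r' c = some s)
        simp only [Finset.card_univ, Fintype.card_fin] at hh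
        omega
      calc n - h = _ := hcard2.symm
        _ ≤ _ := Finset.card_le_card hsub
    have hRnotcard : (Finset.univ.filter (fun r : Fin n => ¬ ∃ c, M r c = some s)).card
        = n - h := by
      have hh := Finset.card_filter_add_card_filter_not
        (s := (Finset.univ : Finset (Fin n)))
        (p := fun r : Fin n => ∃ c, M r c = some s)
      simp only [Finset.card_univ, Fintype.card_fin] at hh
      omega
    have hsplit := Finset.sum_filter_add_sum_filter_not Finset.univ
      (fun r : Fin n => ∃ c, M r c = some s) (plsRowFreq M)
    have h1 : h * (n / 2)
        ≤ ∑ r ∈ Finset.univ.filter (fun r : Fin n => ∃ c, M r c = some s),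
            plsRowFreq M r := by
      have := Finset.card_nsmul_le_sum
        (Finset.univ.filter (fun r : Fin n => ∃ c, M r c = some s))
        (plsRowFreq M) (n / 2) (fun r _ => hrow r)
      rw [smul_eq_mul, hRcard] at this
      exact this
    have h2 : (n - h) * (n - h)
        ≤ ∑ r ∈ Finset.univ.filter (fun r : Fin n => ¬ ∃ c, M r c = some s),
            plsRowFreq M r := by
      have := Finset.card_nsmul_le_sum
        (Finset.univ.filter (fun r : Fin n => ¬ ∃ c, M r c = some s))
        (plsRowFreq M) (n - h)
        (fun r hr => hstep r (by
          intro hmem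
          exact (mem_filter.mp hr).2 (mem_filter.mp hmem).2))
      rw [smul_eq_mul, hRnotcard] at this
      exact le_trans (Nat.le_of_eq rfl) this
    have hsize := PLSaux.size_eq_sum_row M
    have harith := PLSaux.symbol_arith hn hh1
    rw [hF] at hsize
    omega
  -- a row achieving the minimum
  have hex : ∃ r, plsRowFreq M r = n / 2 := by
    by_contra hne
    push_neg at hne
    have hge : ∀ r : Fin n, n / 2 + 1 ≤ plsRowFreq M r := fun r => by
      have h1 := hrow r; have h2 := hne r; omega
    have hsum2 : n * (n / 2 + 1) ≤ ∑ r, plsRowFreq M r := by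
      have := Finset.card_nsmul_le_sum Finset.univ (plsRowFreq M) (n / 2 + 1)
        (fun r _ => hge r)
      simpa [Finset.card_univ, smul_eq_mul] using this
    rw [← PLSaux.size_eq_sum_row, hF] at hsum2
    exact absurd hsum2 (not_le.mpr (PLSaux.exists_arith hn))
  exact ⟨hrow, hcol, hsym, Or.inl hex⟩
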